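/- For every 0 ≤ i ≤ n−4 one has κ·∫(t^i·y²) = subst Q (θ²H̃_i) in A⟦t⟧; that is, the paper's key formula κ·∫₀^T t^i y² dt = ∫₀^Q H_i(Q₁) dQ₁/Q₁ holds at the level of formal power series. -/

import Mathlib

noncomputable section

open PowerSeries

/-- The ring of accessory parameters: polynomials in `ρ_0, …, ρ_{n-4}` over `ℂ`. -/
abbrev AccRing (n : ℕ) : Type := MvPolynomial (Fin (n - 3)) ℂ

/-- Coefficientwise partial derivative of a power series with respect to the
accessory parameter `ρ_i`. -/
noncomputable def pd {n : ℕ} (i : Fin (n - 3)) (u : PowerSeries (AccRing n)) :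
    PowerSeries (AccRing n) :=
  PowerSeries.mk fun m => MvPolynomial.pderiv i (PowerSeries.coeff (R := AccRing n) m u)

/-- The polynomial `P = t·∏_{j=1}^{n-2}(t - α_j)`, viewed in `A⟦t⟧`. -/
noncomputable def Ppoly (n : ℕ) (α : Fin (n - 2) → ℂ) : PowerSeries (AccRing n) :=
  X * ∏ j, (X - C (R := AccRing n) (MvPolynomial.C (α j)))

/-- The polynomial `P̂ = P/t = ∏_{j=1}^{n-2}(t - α_j)`, viewed in `A⟦t⟧`. -/
noncomputable def PhatPoly (n : ℕ) (α : Fin (n - 2) → ℂ) : PowerSeries (AccRing n) :=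
  ∏ j, (X - C (R := AccRing n) (MvPolynomial.C (α j)))

/-- `κ = P̂(0) = (-1)^(n-2) ∏ α_j`. -/
noncomputable def kappa (n : ℕ) (α : Fin (n - 2) → ℂ) : ℂ :=
  (-1) ^ (n - 2) * ∏ j, α j

/-- `P1 = (1 - n/2)²·t^(n-3) - ∑_{i=0}^{n-4} ρ_i·t^i`, viewed in `A⟦t⟧`. -/
noncomputable def P1poly (n : ℕ) : PowerSeries (AccRing n) :=
  C (R := AccRing n) (MvPolynomial.C ((1 - (n : ℂ) / 2) ^ 2)) * X ^ (n - 3)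
    - ∑ i : Fin (n - 3), C (R := AccRing n) (MvPolynomial.X i) * X ^ (i : ℕ)

/-- The differential operator `L u = (P·u')' + P1·u`. -/
noncomputable def Lop (n : ℕ) (α : Fin (n - 2) → ℂ) (u : PowerSeries (AccRing n)) :
    PowerSeries (AccRing n) :=
  derivative (AccRing n) (Ppoly n α * derivative (AccRing n) u) + P1poly n * u

/-- Formal antiderivative with zero constant term. -/
noncomputable def integ {A : Type*} [CommRing A] [Algebra ℚ A] (u : PowerSeries A) :
    PowerSeries A :=
  PowerSeries.mk fun m => if m = 0 then 0 else ((m : ℚ)⁻¹) • PowerSeries.coeff (R := A) (m - 1) u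

/-- Formal substitution of the power series `S` (with zero constant term) into `G`. -/
noncomputable def substS {A : Type*} [CommSemiring A] (S G : PowerSeries A) : PowerSeries A :=
  PowerSeries.mk fun m =>
    ∑ j ∈ Finset.range (m + 1), PowerSeries.coeff (R := A) j G * PowerSeries.coeff (R := A) m (S ^ j)

/-- The operator `θ G = X·dG/dX`. -/
noncomputable def theta {A : Type*} [CommRing A] (G : PowerSeries A) : PowerSeries A :=
  PowerSeries.X * PowerSeries.derivative A G

/-- The formal Eichler integral: divide the `m`-th coefficient by `m³`. -/
noncomputable def eich {A : Type*} [CommRing A] [Algebra ℚ A] (H : PowerSeries A) :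
    PowerSeries A :=
  PowerSeries.mk fun m => (((m : ℚ) ^ 3)⁻¹) • PowerSeries.coeff (R := A) m H

/-- Formal exponential of a power series with zero constant term. -/
noncomputable def expS {A : Type*} [CommRing A] [Algebra ℚ A] (S : PowerSeries A) :
    PowerSeries A :=
  substS S (PowerSeries.exp A)


section Helpers
variable {A : Type*} [CommRing A]

lemma coeff_pow_zero_of_lt (S : PowerSeries A) (hS : constantCoeff (R := A) S = 0)
    {m j : ℕ} (h : m < j) : coeff (R := A) m (S ^ j) = 0 := by
  have hdvd : (X : A⟦X⟧) ^ j ∣ S ^ j := pow_dvd_pow_of_dvd (X_dvd_iff.mpr hS) j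
  exact X_pow_dvd_iff.mp hdvd m h

lemma derivative_eq_zero_iff' {A : Type*} [CommRing A] [Algebra ℚ A] (u : PowerSeries A)
    (h : derivative A u = 0) : u = C (R := A) (constantCoeff (R := A) u) := by
  ext m
  cases m with
  | zero => simp [coeff_zero_eq_constantCoeff]
  | succ m =>
    have h1 : coeff (R := A) m (derivative A u) = 0 := by rw [h]; simp
    rw [coeff_derivative] at h1
    have h2 : ((m+1 : ℚ)⁻¹ • ((coeff (R := A) (m+1) u) * ((m:A)+1))) = coeff (R := A) (m+1) u := by
      rw [Algebra.smul_def]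
      have : ((m : A) + 1) = algebraMap ℚ A ((m:ℚ)+1) := by push_cast; simp
      rw [this, mul_comm ((algebraMap ℚ A) ((m:ℚ)+1)⁻¹), mul_assoc, ← map_mul,
        mul_inv_cancel₀ (by positivity : ((m:ℚ)+1) ≠ 0)]
      simp
    rw [← h2, h1, smul_zero]
    simp [coeff_C]

lemma dpow (S : PowerSeries A) (j : ℕ) :
    derivative A (S ^ (j+1)) = (j+1) • (S ^ j * derivative A S) := by
  induction j with
  | zero => simp
  | succ j ih =>
    rw [pow_succ, Derivation.leibniz, ih]
    rw [smul_comm, ← smul_mul_assoc]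
    rw [pow_succ, succ_nsmul, smul_eq_mul, smul_eq_mul]
    ring

lemma coeff_substS (S G : PowerSeries A) (m : ℕ) :
    coeff (R := A) m (substS S G) =
      ∑ j ∈ Finset.range (m + 1), coeff (R := A) j G * coeff (R := A) m (S ^ j) := by
  simp [substS]

lemma substS_chain (S G : PowerSeries A) (hS : constantCoeff (R := A) S = 0) :
    derivative A (substS S G) = derivative A S * substS S (derivative A G) := by
  ext m
  rw [coeff_derivative, coeff_substS, Finset.sum_mul]
  rw [Finset.sum_range_succ']
  simp only [pow_zero, coeff_one]
  have hz : coeff (R := A) 0 G * (if m + 1 = 0 then 1 else 0) * ((m:A) + 1) = 0 := by simp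
  rw [hz, add_zero]
  have hL : ∀ j ∈ Finset.range (m+1), coeff (R := A) (j+1) G * coeff (R := A) (m+1) (S ^ (j+1)) * ((m:A)+1)
      = coeff (R := A) (j+1) G * ((j+1:A) * coeff (R := A) m (S ^ j * derivative A S)) := by
    intro j _
    have : coeff (R := A) (m+1) (S ^ (j+1)) * ((m:A)+1) = coeff (R := A) m (derivative A (S ^ (j+1))) := by
      rw [coeff_derivative]
    rw [mul_assoc, this, dpow, map_nsmul, nsmul_eq_mul]
    push_cast
    ring_nf
  rw [Finset.sum_congr rfl hL]
  -- RHS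
  rw [coeff_mul, Finset.Nat.sum_antidiagonal_eq_sum_range_succ_mk]
  have hR : ∀ k ∈ Finset.range (m+1),
      coeff (R := A) k (derivative A S) * coeff (R := A) (m-k) (substS S (derivative A G))
      = ∑ l ∈ Finset.range (m+1),
          coeff (R := A) l (derivative A G) * (coeff (R := A) k (derivative A S) * coeff (R := A) (m-k) (S ^ l)) := by
    intro k hk
    rw [coeff_substS, Finset.mul_sum]
    rw [Finset.sum_subset (Finset.range_subset_range.mpr (Nat.succ_le_succ (Nat.sub_le m k)))]
    · exact Finset.sum_congr rfl (fun l _ => by ring)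
    · intro l hl hnl
      simp only [Finset.mem_range] at hl hnl
      rw [coeff_pow_zero_of_lt S hS (by omega), mul_zero, mul_zero]
  rw [Finset.sum_congr rfl hR, Finset.sum_comm]
  refine Finset.sum_congr rfl (fun l _ => ?_)
  rw [← Finset.mul_sum]
  rw [coeff_derivative, ← Finset.Nat.sum_antidiagonal_eq_sum_range_succ_mk
    (f := fun p => coeff (R := A) p.1 (derivative A S) * coeff (R := A) p.2 (S ^ l)), ← coeff_mul]
  have : coeff (R := A) m (derivative A S * S ^ l) = coeff (R := A) m (S ^ l * derivative A S) := by
    rw [mul_comm]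
  rw [this]
  push_cast
  ring

lemma substS_X_mul (S G : PowerSeries A) (hS : constantCoeff (R := A) S = 0) :
    substS S (X * G) = S * substS S G := by
  ext m
  rw [coeff_substS, Finset.sum_range_succ']
  have hz : coeff (R := A) 0 (X * G) * coeff (R := A) m (S ^ 0) = 0 := by
    rw [coeff_zero_eq_constantCoeff_apply, map_mul, constantCoeff_X, zero_mul, zero_mul]
  rw [hz, add_zero]
  simp only [coeff_succ_X_mul]
  -- RHS
  rw [coeff_mul, Finset.Nat.sum_antidiagonal_eq_sum_range_succ_mk]
  have hR : ∀ k ∈ Finset.range (m+1),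
      coeff (R := A) k S * coeff (R := A) (m-k) (substS S G)
      = ∑ l ∈ Finset.range (m+1), coeff (R := A) l G * (coeff (R := A) k S * coeff (R := A) (m-k) (S ^ l)) := by
    intro k hk
    rw [coeff_substS, Finset.mul_sum]
    rw [Finset.sum_subset (Finset.range_subset_range.mpr (Nat.succ_le_succ (Nat.sub_le m k)))]
    · exact Finset.sum_congr rfl (fun l _ => by ring)
    · intro l hl hnl
      simp only [Finset.mem_range] at hl hnl
      rw [coeff_pow_zero_of_lt S hS (by omega), mul_zero, mul_zero]
  rw [Finset.sum_congr rfl hR, Finset.sum_comm]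
  have hR2 : ∀ l ∈ Finset.range (m+1),
      (∑ k ∈ Finset.range (m+1), coeff (R := A) l G * (coeff (R := A) k S * coeff (R := A) (m-k) (S ^ l)))
      = coeff (R := A) l G * coeff (R := A) m (S ^ (l+1)) := by
    intro l _
    rw [← Finset.mul_sum, pow_succ, mul_comm (S ^ l) S, coeff_mul,
      Finset.Nat.sum_antidiagonal_eq_sum_range_succ_mk]
  rw [Finset.sum_congr rfl hR2, Finset.sum_range_succ,
    coeff_pow_zero_of_lt S hS (Nat.lt_succ_self m), mul_zero, add_zero]

variable [Algebra ℚ A]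

lemma algMap_succ (m : ℕ) : algebraMap ℚ A ((m:ℚ)+1) = ((m:A)+1) := by
  rw [map_add, map_one, map_natCast]

lemma natCast_mul_eq_smul (m : ℕ) (a : A) : a * ((m:A)+1) = ((m:ℚ)+1) • a := by
  rw [Algebra.smul_def, mul_comm, algMap_succ]

lemma cast_smul_cancel (m : ℕ) (a : A) : ((m:ℚ)+1)⁻¹ • (a * ((m:A)+1)) = a := by
  rw [natCast_mul_eq_smul, inv_smul_smul₀ (by positivity)]

lemma derivative_exp' : derivative A (PowerSeries.exp A) = PowerSeries.exp A := by
  ext m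
  rw [coeff_derivative, coeff_exp, coeff_exp]
  have h1 : ((m:A)+1) = algebraMap ℚ A ((m:ℚ)+1) := (algMap_succ m).symm
  push_cast
  rw [h1, ← map_mul]
  congr 1
  have hf : ((m.factorial : ℚ)) ≠ 0 := Nat.cast_ne_zero.mpr m.factorial_ne_zero
  rw [Nat.factorial_succ]
  push_cast
  field_simp

lemma derivative_integ (u : PowerSeries A) : derivative A (integ u) = u := by
  ext m
  rw [coeff_derivative, integ, coeff_mk]
  simp only [Nat.succ_ne_zero, if_false, Nat.add_sub_cancel]
  push_cast
  rw [smul_mul_assoc, cast_smul_cancel]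

lemma constantCoeff_integ (u : PowerSeries A) : constantCoeff (R := A) (integ u) = 0 := by
  rw [← coeff_zero_eq_constantCoeff_apply, integ, coeff_mk, if_pos rfl]

lemma eq_of_derivative_eq (u v : PowerSeries A)
    (hd : derivative A u = derivative A v) (hc : constantCoeff (R := A) u = constantCoeff (R := A) v) :
    u = v := by
  have h1 : derivative A (u - v) = 0 := by rw [map_sub, hd, sub_self]
  have h2 := derivative_eq_zero_iff' (u - v) h1
  rw [map_sub, hc, sub_self, map_zero] at h2
  exact sub_eq_zero.mp h2

lemma coeff_theta (G : PowerSeries A) (m : ℕ) : coeff (R := A) m (theta G) = coeff (R := A) m G * (m : A) := by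
  cases m with
  | zero =>
    rw [theta, coeff_zero_eq_constantCoeff_apply, map_mul, constantCoeff_X, zero_mul,
      Nat.cast_zero, mul_zero]
  | succ m =>
    rw [theta, coeff_succ_X_mul, coeff_derivative]
    norm_cast

lemma theta_eich (H : PowerSeries A) (hH0 : constantCoeff (R := A) H = 0) :
    X * derivative A (theta (theta (eich H))) = H := by
  ext m
  cases m with
  | zero =>
    rw [coeff_zero_eq_constantCoeff_apply, coeff_zero_eq_constantCoeff_apply, map_mul,
      constantCoeff_X, zero_mul, hH0]
  | succ m =>
    rw [coeff_succ_X_mul, coeff_derivative, coeff_theta, coeff_theta, eich, coeff_mk]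
    push_cast
    rw [smul_mul_assoc, smul_mul_assoc, smul_mul_assoc]
    have h3 : coeff (R := A) (m+1) H * ((m:A)+1) * ((m:A)+1) * ((m:A)+1)
        = (((m:ℚ)+1)^3) • coeff (R := A) (m+1) H := by
      rw [Algebra.smul_def, map_pow, algMap_succ]
      ring
    rw [h3, inv_smul_smul₀ (pow_ne_zero 3 (by positivity))]

end Helpers

section Helpers2
variable {A : Type*} [CommRing A]

lemma constantCoeff_substS (S G : PowerSeries A) :
    constantCoeff (R := A) (substS S G) = constantCoeff (R := A) G := by
  rw [← coeff_zero_eq_constantCoeff_apply, coeff_substS]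
  simp

end Helpers2

theorem main_aux {A : Type*} [CommRing A] [IsDomain A] [Algebra ℚ A]
    (P Ph P1 : PowerSeries A) (κ : A)
    (hP : P = X * Ph) (hPh0 : constantCoeff (R := A) Ph = κ)
    (y b yinv Q H : PowerSeries A)
    (hy1 : constantCoeff (R := A) y = 1)
    (hy : derivative A (P * derivative A y) + P1 * y = 0)
    (hb0 : constantCoeff (R := A) b = 0)
    (hb : (derivative A (P * derivative A b) + P1 * b) + 2 * Ph * derivative A y
        + derivative A Ph * y = 0)
    (hyinv : y * yinv = 1)
    (hQ : Q = X * expS (b * yinv))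
    (k : ℕ) (hH0 : constantCoeff (R := A) H = 0)
    (hH : substS Q H = P * X ^ k * y ^ 4) :
    C (R := A) κ * integ (X ^ k * y ^ 2) = substS Q (theta (theta (eich H))) := by
  set D := derivative A with hD
  set S : PowerSeries A := b * yinv with hSdef
  set E : PowerSeries A := expS S with hEdef
  have hS0 : constantCoeff (R := A) S = 0 := by rw [hSdef, map_mul, hb0, zero_mul]
  have hE1 : constantCoeff (R := A) E = 1 := by
    rw [hEdef, expS, constantCoeff_substS, constantCoeff_exp]
  have hQ0 : constantCoeff (R := A) Q = 0 := by rw [hQ, map_mul, constantCoeff_X, zero_mul]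
  have hEne : E ≠ 0 := fun h => by simp [h] at hE1
  have hQne : Q ≠ 0 := by
    rw [hQ]
    exact mul_ne_zero X_ne_zero hEne
  have hE' : D E = D S * E := by
    rw [hEdef, expS, hD, substS_chain S _ hS0, derivative_exp']
  have hQ' : D Q = E + X * (D S * E) := by
    rw [hQ, hD, Derivation.leibniz, smul_eq_mul, smul_eq_mul, ← hD, hE', derivative_X, mul_one,
      add_comm]
  have hWr : y * D yinv + yinv * D y = 0 := by
    have h := congrArg D hyinv
    rwa [Derivation.leibniz, smul_eq_mul, smul_eq_mul, Derivation.map_one_eq_zero] at h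
  have key1 : y ^ 2 * D S = D b * y - b * D y := by
    rw [hSdef, hD, Derivation.leibniz, smul_eq_mul, smul_eq_mul, ← hD]
    linear_combination (D b * y - b * D y) * hyinv + (y * b) * hWr
  set W : PowerSeries A := Ph * (y * y) + (P * D b) * y - (P * D y) * b with hWdef
  have hdW : D W = 0 := by
    rw [hWdef, hD]
    simp only [map_add, map_sub, Derivation.leibniz, smul_eq_mul] at hy hb ⊢
    linear_combination y * hb - b * hy
  have hW : W = C (R := A) κ := by
    have h := derivative_eq_zero_iff' W hdW
    have hc : constantCoeff (R := A) W = κ := by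
      have hP0 : constantCoeff (R := A) P = 0 := by rw [hP, map_mul, constantCoeff_X, zero_mul]
      rw [hWdef]
      simp [map_sub, map_add, map_mul, hPh0, hy1, hP0]
    rw [h, hc]
  have key : C (R := A) κ * Q = D Q * (P * y ^ 2) := by
    rw [hQ', hQ, hP]
    linear_combination (-(X * E)) * hW + (-(X * X * E * Ph)) * key1
      + (X * E * (D b * y - b * D y)) * hP
  apply eq_of_derivative_eq
  · show D _ = D _
    rw [hD, substS_chain Q _ hQ0, ← hD]
    apply mul_left_cancel₀ hQne
    have hG1 : substS Q (X * D (theta (theta (eich H))))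
        = Q * substS Q (D (theta (theta (eich H)))) := substS_X_mul Q _ hQ0
    have hXG1 : X * D (theta (theta (eich H))) = H := theta_eich H hH0
    calc Q * D (C (R := A) κ * integ (X ^ k * y ^ 2))
        = Q * (C (R := A) κ * (X ^ k * y ^ 2)) := by
          rw [hD, Derivation.leibniz, smul_eq_mul, smul_eq_mul, derivative_C, mul_zero,
            add_zero, derivative_integ]
      _ = D Q * substS Q H := by
          rw [hH]
          linear_combination (X ^ k * y ^ 2) * key
      _ = D Q * (Q * substS Q (D (theta (theta (eich H))))) := by
          rw [← hG1, hXG1]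
      _ = Q * (D Q * substS Q (D (theta (theta (eich H))))) := by ring
  · rw [map_mul, constantCoeff_integ, mul_zero, constantCoeff_substS, theta, map_mul,
      constantCoeff_X, zero_mul]

/-- `κ·∫(t^i·y²) = (θ²H̃_i) ∘ Q`. -/
theorem stmt7 (n : ℕ) (hn : 4 ≤ n) (α : Fin (n - 2) → ℂ)
    (hα0 : ∀ j, α j ≠ 0) (hαinj : Function.Injective α)
    (y b yinv Q : PowerSeries (AccRing n))
    (hy1 : constantCoeff (R := AccRing n) y = 1) (hy : Lop n α y = 0)
    (hb0 : constantCoeff (R := AccRing n) b = 0)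
    (hb : Lop n α b + 2 * PhatPoly n α * derivative (AccRing n) y
        + derivative (AccRing n) (PhatPoly n α) * y = 0)
    (hyinv : y * yinv = 1)
    (hQ : Q = X * expS (b * yinv))
    (i : Fin (n - 3)) (H : PowerSeries (AccRing n))
    (hH0 : constantCoeff (R := AccRing n) H = 0)
    (hH : substS Q H = Ppoly n α * X ^ (i : ℕ) * y ^ 4) :
    C (R := AccRing n) (MvPolynomial.C (kappa n α)) * integ (X ^ (i : ℕ) * y ^ 2)
      = substS Q (theta (theta (eich H))) := by
  have hPh0 : constantCoeff (R := AccRing n) (PhatPoly n α) = MvPolynomial.C (kappa n α) := by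
    rw [PhatPoly, map_prod]
    have h1 : ∀ j : Fin (n - 2), constantCoeff (R := AccRing n) (X - C (R := AccRing n) (MvPolynomial.C (α j)))
        = MvPolynomial.C (- α j) := by
      intro j
      rw [map_sub, constantCoeff_X, constantCoeff_C, zero_sub, map_neg]
    rw [Finset.prod_congr rfl (fun j _ => h1 j), ← map_prod, kappa]
    congr 1
    calc ∏ x : Fin (n-2), -α x = ∏ x : Fin (n-2), (-1) * α x := by simp
      _ = (-1:ℂ)^(n-2) * ∏ x : Fin (n-2), α x := by
          rw [Finset.prod_mul_distrib, Finset.prod_const, Finset.card_univ, Fintype.card_fin]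
  exact main_aux (Ppoly n α) (PhatPoly n α) (P1poly n) (MvPolynomial.C (kappa n α)) rfl hPh0
    y b yinv Q H hy1 hy hb0 hb hyinv hQ (i : ℕ) hH0 hH
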